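/- arXiv:2004.10070 — 2 statements merged into one kernel-verified Lean document; each statement's English description precedes it below -/
import Mathlib

section
/- Let V be an n-dimensional complex vector space, 0 < m < n, and Z ⊆ ⋀^mV a linear subspace containing no nonzero decomposable vector. Let Λ ≠ Λ' be m-dimensional subspaces of V with Plücker vectors u and u'. The following are equivalent: (a) π_Z(Λ) = π_Z(Λ'); (b) there exists a nonzero ω ∈ Z with π_ω(Λ) = π_ω(Λ'); (c) there exist scalars a, b ∈ ℂ, not both zero, such that a·u + b·u' is a nonzero element of Z (i.e., the projective line through the Plücker points of Λ and Λ' meets ℙZ). -/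
open ExteriorAlgebra

/-- A degree-`m` element of the exterior algebra is decomposable if it is the wedge of `m`
vectors. -/
def Decomposable {V : Type*} [AddCommGroup V] [Module ℂ V] (m : ℕ)
    (ω : ExteriorAlgebra ℂ V) : Prop :=
  ∃ v : Fin m → V, ω = ιMulti ℂ m v

/-- `u` is a Plücker vector of the `m`-dimensional subspace `Λ`. -/
def IsPluckerVector {V : Type*} [AddCommGroup V] [Module ℂ V] (m : ℕ)
    (Λ : Submodule ℂ V) (u : ExteriorAlgebra ℂ V) : Prop :=
  ∃ v : Fin m → V, Submodule.span ℂ (Set.range v) = Λ ∧ u = ιMulti ℂ m v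

/-- The images of `u` and `u'` in the quotient `(⋀V)/Z` span the same line; this expresses
`π_Z(Λ) = π_Z(Λ')` for subspaces with Plücker vectors `u` and `u'`. -/
def ProjEq {V : Type*} [AddCommGroup V] [Module ℂ V] (Z : Submodule ℂ (ExteriorAlgebra ℂ V))
    (u u' : ExteriorAlgebra ℂ V) : Prop :=
  Submodule.span ℂ {Z.mkQ u} = Submodule.span ℂ {Z.mkQ u'}

/-- The wedge of a linearly independent family is nonzero. -/
lemma iMulti_ne_zero {V : Type*} [AddCommGroup V] [Module ℂ V] {k : ℕ}
    {v : Fin k → V} (hv : LinearIndependent ℂ v) : ιMulti ℂ k v ≠ 0 := by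
  classical
  obtain ⟨W', hW'⟩ := Submodule.exists_isCompl (Submodule.span ℂ (Set.range v))
  set W := Submodule.span ℂ (Set.range v) with hWdef
  let B : Module.Basis (Fin k) ℂ W := Module.Basis.span hv
  let proj : V →ₗ[ℂ] W := Submodule.linearProjOfIsCompl W W' hW'
  let φ : V →ₗ[ℂ] (Fin k → ℂ) := B.equivFun.toLinearMap ∘ₗ proj
  let f : V [⋀^Fin k]→ₗ[ℂ] ℂ := Matrix.detRowAlternating.compLinearMap φ
  have hfv : f v = 1 := by
    have hmat : (Matrix.of fun i => φ (v i)) = (1 : Matrix (Fin k) (Fin k) ℂ) := by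
      ext i j
      have hvW : v i ∈ W := Submodule.subset_span ⟨i, rfl⟩
      have hproj : proj (v i) = B i := by
        have := Submodule.linearProjOfIsCompl_apply_left hW' ⟨v i, hvW⟩
        rw [show ((⟨v i, hvW⟩ : W) : V) = v i from rfl] at this
        rw [show proj (v i) = (⟨v i, hvW⟩ : W) from this]
        exact (Module.Basis.span_apply hv i).symm
      simp only [Matrix.of_apply, φ, LinearMap.comp_apply, hproj,
        LinearEquiv.coe_coe, Module.Basis.equivFun_self, Matrix.one_apply]
    show Matrix.detRowAlternating (fun i => φ (v i)) = 1
    rw [show (Matrix.detRowAlternating (fun i => φ (v i))) =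
      Matrix.det (Matrix.of fun i => φ (v i)) from rfl, hmat, Matrix.det_one]
  intro h
  have h1 : liftAlternating (R := ℂ) (Pi.single k f) (ιMulti ℂ k v) = 1 := by
    rw [liftAlternating_apply_ιMulti, Pi.single_eq_same, hfv]
  rw [h, map_zero] at h1
  exact one_ne_zero h1.symm

lemma cons_wedge {V : Type*} [AddCommGroup V] [Module ℂ V] {m : ℕ}
    (w : V) (v : Fin m → V) :
    ιMulti ℂ (m + 1) (Fin.cons w v) = ι ℂ w * ιMulti ℂ m v := by
  rw [ιMulti_succ_apply, Fin.cons_zero]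
  congr 1

lemma wedge_self_zero {V : Type*} [AddCommGroup V] [Module ℂ V] {m : ℕ}
    (v : Fin m → V) (i : Fin m) : ι ℂ (v i) * ιMulti ℂ m v = 0 := by
  rw [← cons_wedge]
  exact (ιMulti ℂ (m+1)).map_eq_zero_of_eq _
    (by rw [Fin.cons_zero, Fin.cons_succ]) (Fin.succ_ne_zero i).symm

lemma wedge_eq_zero_iff {V : Type*} [AddCommGroup V] [Module ℂ V] {m : ℕ}
    {v : Fin m → V} (hv : LinearIndependent ℂ v) (w : V) :
    ι ℂ w * ιMulti ℂ m v = 0 ↔ w ∈ Submodule.span ℂ (Set.range v) := by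
  constructor
  · intro h
    by_contra hw
    exact iMulti_ne_zero (linearIndependent_fin_cons.mpr ⟨hv, hw⟩)
      ((cons_wedge w v).trans h)
  · intro h
    obtain ⟨c, hc⟩ := (Submodule.mem_span_range_iff_exists_fun ℂ).mp h
    rw [← hc, map_sum]
    rw [Finset.sum_mul]
    refine Finset.sum_eq_zero fun i _ => ?_
    rw [map_smul, smul_mul_assoc, wedge_self_zero, smul_zero]

lemma plucker_le {V : Type*} [AddCommGroup V] [Module ℂ V] {m : ℕ}
    {v v' : Fin m → V} (hv : LinearIndependent ℂ v)
    {c : ℂ} (hc : c ≠ 0) (h : ιMulti ℂ m v' = c • ιMulti ℂ m v) :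
    Submodule.span ℂ (Set.range v') ≤ Submodule.span ℂ (Set.range v) := by
  rw [Submodule.span_le]
  rintro _ ⟨i, rfl⟩
  rw [SetLike.mem_coe, ← wedge_eq_zero_iff hv]
  have h0 : ι ℂ (v' i) * ιMulti ℂ m v' = 0 := wedge_self_zero v' i
  rw [h, mul_smul_comm] at h0
  exact (smul_eq_zero.mp h0).resolve_left hc

/-- For an `n`-dimensional complex `V`, `0 < m < n`, a center `Z ⊆ ⋀^mV`
containing no nonzero decomposable vector, and distinct `m`-dimensional subspaces
`Λ ≠ Λ'` with Plücker vectors `u, u'`, the following are equivalent: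
(a) `π_Z(Λ) = π_Z(Λ')`; (b) there is a nonzero `ω ∈ Z` with `π_ω(Λ) = π_ω(Λ')`;
(c) some nontrivial combination `a•u + b•u'` is a nonzero element of `Z`. -/
theorem stmt2 {V : Type*} [AddCommGroup V] [Module ℂ V] [FiniteDimensional ℂ V]
    (n m : ℕ) (hV : Module.finrank ℂ V = n) (hm : 0 < m) (hmn : m < n)
    (Z : Submodule ℂ (ExteriorAlgebra ℂ V)) (hZm : Z ≤ ⋀[ℂ]^m V)
    (hZ : ∀ z ∈ Z, z ≠ 0 → ¬ Decomposable m z)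
    (Λ Λ' : Submodule ℂ V)
    (hΛ : Module.finrank ℂ Λ = m) (hΛ' : Module.finrank ℂ Λ' = m) (hne : Λ ≠ Λ')
    (u u' : ExteriorAlgebra ℂ V)
    (hu : IsPluckerVector m Λ u) (hu' : IsPluckerVector m Λ' u') :
    (ProjEq Z u u' ↔ ∃ ω ∈ Z, ω ≠ 0 ∧ ProjEq (Submodule.span ℂ {ω}) u u') ∧
    (ProjEq Z u u' ↔ ∃ a b : ℂ, ¬(a = 0 ∧ b = 0) ∧
      a • u + b • u' ∈ Z ∧ a • u + b • u' ≠ 0) := by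
  classical
  obtain ⟨v, hvspan, hvU⟩ := hu
  obtain ⟨v', hvspan', hvU'⟩ := hu'
  have hvind : LinearIndependent ℂ v := by
    rw [linearIndependent_iff_card_eq_finrank_span]
    rw [Fintype.card_fin, Set.finrank, hvspan, hΛ]
  have hvind' : LinearIndependent ℂ v' := by
    rw [linearIndependent_iff_card_eq_finrank_span]
    rw [Fintype.card_fin, Set.finrank, hvspan', hΛ']
  have hu0' : u' ≠ 0 := by rw [hvU']; exact iMulti_ne_zero hvind'
  -- non-proportionality (Plücker injectivity)
  have hprop : ∀ c : ℂ, u' ≠ c • u := by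
    intro c hc
    have hc0 : c ≠ 0 := by
      rintro rfl
      rw [zero_smul] at hc
      exact hu0' hc
    apply hne
    have h1 : Λ' ≤ Λ := by
      rw [← hvspan, ← hvspan']
      exact plucker_le hvind hc0 (by rw [← hvU, ← hvU']; exact hc)
    exact (Submodule.eq_of_le_of_finrank_eq h1 (hΛ'.trans hΛ.symm)).symm
  -- scalar multiples of wedges are decomposable
  have hdec : ∀ (a : ℂ) (w : Fin m → V), Decomposable m (a • ιMulti ℂ m w) := by
    intro a w
    refine ⟨Function.update w ⟨0, hm⟩ (a • w ⟨0, hm⟩), ?_⟩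
    rw [(ιMulti ℂ m).map_update_smul w ⟨0, hm⟩ a (w ⟨0, hm⟩), Function.update_eq_self]
  have hab : ∀ a b : ℂ, a • u + b • u' ∈ Z → a • u + b • u' ≠ 0 → a ≠ 0 ∧ b ≠ 0 := by
    intro a b hmem hne0
    constructor
    · rintro rfl
      rw [zero_smul, zero_add] at hmem hne0
      exact hZ _ hmem hne0 (by rw [hvU']; exact hdec b v')
    · rintro rfl
      rw [zero_smul, add_zero] at hmem hne0
      exact hZ _ hmem hne0 (by rw [hvU]; exact hdec a v)
  have hspan : ∀ (W : Submodule ℂ (ExteriorAlgebra ℂ V)) (a b : ℂ), a ≠ 0 → b ≠ 0 →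
      a • W.mkQ u + b • W.mkQ u' = 0 → ProjEq W u u' := by
    intro W a b ha hb h0
    have h2 : b • W.mkQ u' = -(a • W.mkQ u) := eq_neg_of_add_eq_zero_right h0
    have h1 : W.mkQ u' = (-(b⁻¹ * a)) • W.mkQ u := by
      calc W.mkQ u' = b⁻¹ • (b • W.mkQ u') := by
            rw [smul_smul, inv_mul_cancel₀ hb, one_smul]
        _ = (-(b⁻¹ * a)) • W.mkQ u := by rw [h2, smul_neg, smul_smul, neg_smul]
    unfold ProjEq
    rw [h1]
    exact (Submodule.span_singleton_smul_eq
      (isUnit_iff_ne_zero.mpr (neg_ne_zero.mpr (mul_ne_zero (inv_ne_zero hb) ha))) _).symm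
  have main2 : ProjEq Z u u' ↔ ∃ a b : ℂ, ¬(a = 0 ∧ b = 0) ∧
      a • u + b • u' ∈ Z ∧ a • u + b • u' ≠ 0 := by
    constructor
    · intro h
      have hmem : Z.mkQ u' ∈ Submodule.span ℂ {Z.mkQ u} := by
        rw [h]; exact Submodule.mem_span_singleton_self _
      obtain ⟨c, hc⟩ := Submodule.mem_span_singleton.mp hmem
      refine ⟨-c, 1, by simp, ?_, ?_⟩
      · rw [← Submodule.ker_mkQ Z, LinearMap.mem_ker, map_add, map_smul, map_smul,
          one_smul, ← hc, neg_smul, neg_add_cancel]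
      · intro h0
        apply hprop c
        rw [neg_smul, one_smul, add_comm, ← sub_eq_add_neg, sub_eq_zero] at h0
        exact h0
    · rintro ⟨a, b, hab0, hmem, hne0⟩
      obtain ⟨ha, hb⟩ := hab a b hmem hne0
      apply hspan Z a b ha hb
      have h0 : Z.mkQ (a • u + b • u') = 0 := by
        rw [Submodule.mkQ_apply, Submodule.Quotient.mk_eq_zero]
        exact hmem
      rw [map_add, map_smul, map_smul] at h0
      exact h0
  refine ⟨?_, main2⟩
  constructor
  · intro h
    obtain ⟨a, b, hab0, hmem, hne0⟩ := main2.mp h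
    obtain ⟨ha, hb⟩ := hab a b hmem hne0
    refine ⟨a • u + b • u', hmem, hne0, ?_⟩
    apply hspan _ a b ha hb
    have h0 : (Submodule.span ℂ {a • u + b • u'}).mkQ (a • u + b • u') = 0 := by
      rw [Submodule.mkQ_apply, Submodule.Quotient.mk_eq_zero]
      exact Submodule.mem_span_singleton_self _
    rw [map_add, map_smul, map_smul] at h0
    exact h0
  · rintro ⟨ω, hωZ, hω0, hP⟩
    set W := Submodule.span ℂ {ω} with hWdef
    have hmem : W.mkQ u' ∈ Submodule.span ℂ {W.mkQ u} := by
      rw [hP]; exact Submodule.mem_span_singleton_self _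
    obtain ⟨c, hc⟩ := Submodule.mem_span_singleton.mp hmem
    have hker : u' - c • u ∈ W := by
      rw [← Submodule.ker_mkQ W, LinearMap.mem_ker, map_sub, map_smul, hc, sub_self]
    obtain ⟨s, hs⟩ := Submodule.mem_span_singleton.mp hker
    have hs0 : s ≠ 0 := by
      rintro rfl
      rw [zero_smul] at hs
      exact hprop c (sub_eq_zero.mp hs.symm)
    apply main2.mpr
    have heq : (-c) • u + (1 : ℂ) • u' = s • ω := by
      rw [neg_smul, one_smul, add_comm, ← sub_eq_add_neg, ← hs]
    refine ⟨-c, 1, by simp, ?_, ?_⟩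
    · rw [heq]; exact Z.smul_mem s hωZ
    · rw [heq]; exact smul_ne_zero hs0 hω0
end

section
/- Let V be a 6-dimensional complex vector space and ω ∈ O₅, with kernel line α_ω and associated hyperplane A_ω. If Λ ≠ Λ' are 3-dimensional subspaces of V with π_ω(Λ) = π_ω(Λ'), then Λ ∩ Λ' = α_ω and Λ + Λ' = A_ω. -/
open ExteriorAlgebra

/-- Membership in the Segre orbit `O₅`. -/
def InO5 {V : Type*} [AddCommGroup V] [Module ℂ V] (ω : ExteriorAlgebra ℂ V) : Prop :=
  ω ∈ ⋀[ℂ]^3 V ∧ (¬ ∃ a b c : V, ω = ι ℂ a * ι ℂ b * ι ℂ c) ∧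
    ∃ v : V, v ≠ 0 ∧ ι ℂ v * ω = 0

section Aux

variable {V : Type*} [AddCommGroup V] [Module ℂ V]

/-- wedge of cons -/
lemma iota_cons {n : ℕ} (x : V) (w : Fin n → V) :
    ι ℂ x * ιMulti ℂ n w = ιMulti ℂ (n+1) (Fin.cons x w) := by
  rw [ιMulti_succ_apply, Fin.cons_zero]
  congr 1

lemma ιMulti_mk3 (a b c : V) : ιMulti ℂ 3 ![a,b,c] = ι ℂ a * ι ℂ b * ι ℂ c := by
  rw [ιMulti_apply]
  simp [List.ofFn_succ, mul_assoc]

lemma ιMulti_mk2 (a b : V) : ιMulti ℂ 2 ![a,b] = ι ℂ a * ι ℂ b := by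
  rw [ιMulti_apply]
  simp [List.ofFn_succ, mul_assoc]

/-- evaluation functional -/
noncomputable def phiF (n : ℕ) (g : Fin n → Module.Dual ℂ V) :
    ExteriorAlgebra ℂ V →ₗ[ℂ] ℂ :=
  liftAlternating (fun i => if h : i = n then
    h ▸ (Matrix.detRowAlternating.compLinearMap (LinearMap.pi g)) else 0)

lemma phiF_apply (n : ℕ) (g : Fin n → Module.Dual ℂ V) (w : Fin n → V) :
    phiF n g (ιMulti ℂ n w) = Matrix.det (Matrix.of fun i j => g j (w i)) := by
  rw [phiF, liftAlternating_apply_ιMulti, dif_pos rfl]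
  rfl

/-- dual family -/
lemma exists_dual_family {m : ℕ} (w : Fin m → V) (hw : LinearIndependent ℂ w) :
    ∃ g : Fin m → Module.Dual ℂ V, ∀ i j, g i (w j) = if i = j then 1 else 0 := by
  set W := Submodule.span ℂ (Set.range w)
  let bW : Module.Basis (Fin m) ℂ W := Module.Basis.span hw
  obtain ⟨q, hq⟩ := Submodule.exists_isCompl W
  let prj : V →ₗ[ℂ] W := Submodule.projectionOnto W q hq
  refine ⟨fun i => (bW.coord i).comp prj, fun i j => ?_⟩
  have hmem : w j ∈ W := Submodule.subset_span (Set.mem_range_self j)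
  have h1 : prj (w j) = ⟨w j, hmem⟩ := by
    simpa using Submodule.projectionOnto_apply_left hq ⟨w j, hmem⟩
  have h2 : (⟨w j, hmem⟩ : W) = bW j := by
    ext; exact congrArg Subtype.val (Module.Basis.span_apply hw j).symm
  simp only [LinearMap.comp_apply, h1, h2, Module.Basis.coord_apply, Module.Basis.repr_self]
  rw [Finsupp.single_apply]
  exact if_congr eq_comm rfl rfl

lemma ιMulti_ne_zero {n : ℕ} (w : Fin n → V) (hw : LinearIndependent ℂ w) :
    ιMulti ℂ n w ≠ 0 := by
  obtain ⟨g, hg⟩ := exists_dual_family w hw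
  intro h
  have h2 := congrArg (phiF n g) h
  rw [phiF_apply, map_zero] at h2
  have h3 : (Matrix.of fun i j => g j (w i)) = 1 := by
    ext i j
    rw [Matrix.of_apply, hg j i, Matrix.one_apply]
    exact if_congr eq_comm rfl rfl
  rw [h3, Matrix.det_one] at h2
  exact one_ne_zero h2

lemma mul_ιMulti_eq_zero {n : ℕ} (x : V) (w : Fin n → V)
    (hx : x ∈ Submodule.span ℂ (Set.range w)) : ι ℂ x * ιMulti ℂ n w = 0 := by
  rw [iota_cons]
  apply AlternatingMap.map_linearDependent
  intro h
  exact (linearIndependent_fin_cons.mp h).2 hx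

lemma mem_span_of_mul_eq_zero {n : ℕ} (x : V) (w : Fin n → V) (hw : LinearIndependent ℂ w)
    (h : ι ℂ x * ιMulti ℂ n w = 0) : x ∈ Submodule.span ℂ (Set.range w) := by
  by_contra hx
  exact ιMulti_ne_zero _ (linearIndependent_fin_cons.mpr ⟨hw, hx⟩) (iota_cons x w ▸ h)

lemma exists_smul_eq_ιMulti (x v : Fin 3 → V) (hx : LinearIndependent ℂ x)
    (hv : ∀ j, v j ∈ Submodule.span ℂ (Set.range x)) :
    ∃ k : ℂ, ιMulti ℂ 3 v = k • ιMulti ℂ 3 x := by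
  set W := Submodule.span ℂ (Set.range x)
  let bW : Module.Basis (Fin 3) ℂ W := Module.Basis.span hx
  let vv : Fin 3 → W := fun j => ⟨v j, hv j⟩
  refine ⟨bW.det vv, ?_⟩
  rw [← sub_eq_zero, ← Module.forall_dual_apply_eq_zero_iff ℂ]
  intro φ
  have key : ∀ F : V [⋀^Fin 3]→ₗ[ℂ] ℂ, F v = bW.det vv * F x := by
    intro F
    let F' : W [⋀^Fin 3]→ₗ[ℂ] ℂ := F.compLinearMap W.subtype
    have h1 : F' = F' ⇑bW • bW.det := F'.eq_smul_basis_det bW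
    have h2 : F' vv = F v := rfl
    have h3 : F' ⇑bW = F x := by
      rw [AlternatingMap.compLinearMap_apply]
      congr 1
      funext i
      exact congrArg Subtype.val (Module.Basis.span_apply hx i)
    have h4 : F' vv = (F' ⇑bW) * bW.det vv := by
      conv_lhs => rw [h1]
      simp
    rw [← h2, h4, h3, mul_comm]
  have := key (φ.compAlternatingMap (ιMulti ℂ 3))
  simp only [LinearMap.compAlternatingMap_apply] at this
  rw [map_sub, map_smul, this, sub_eq_zero, smul_eq_mul]

lemma ιMulti_eq3 (w : Fin 3 → V) : ιMulti ℂ 3 w = ι ℂ (w 0) * ι ℂ (w 1) * ι ℂ (w 2) := by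
  have h : w = ![w 0, w 1, w 2] := by funext j; fin_cases j <;> rfl
  calc ιMulti ℂ 3 w = ιMulti ℂ 3 ![w 0, w 1, w 2] := by rw [← h]
  _ = ι ℂ (w 0) * ι ℂ (w 1) * ι ℂ (w 2) := ιMulti_mk3 _ _ _

lemma phiF2_mul (g1 g2 : Module.Dual ℂ V) (s t : V) :
    phiF 2 ![g1, g2] (ι ℂ s * ι ℂ t) = g1 s * g2 t - g2 s * g1 t := by
  rw [← ιMulti_mk2, phiF_apply, Matrix.det_fin_two]
  simp

lemma repl_lemma [FiniteDimensional ℂ V] (Λ : Submodule ℂ V) (w : Fin 3 → V)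
    (hsp : Submodule.span ℂ (Set.range w) = Λ) (hfr : Module.finrank ℂ Λ = 3)
    (α : V) (c : Fin 3 → ℂ) (hα : α = c 0 • w 0 + c 1 • w 1 + c 2 • w 2) (hc : c 0 ≠ 0) :
    LinearIndependent ℂ ![α, w 1, w 2] ∧ Submodule.span ℂ (Set.range ![α, w 1, w 2]) = Λ := by
  have hrs : Set.range ![α, w 1, w 2] = {α, w 1, w 2} := by
    ext z; simp [Matrix.range_cons, Matrix.range_empty]; tauto
  have hwmem : ∀ j, w j ∈ Λ := fun j => hsp ▸ Submodule.subset_span (Set.mem_range_self j)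
  have hαmem : α ∈ Λ := by
    rw [hα]
    exact add_mem (add_mem (Submodule.smul_mem _ _ (hwmem 0)) (Submodule.smul_mem _ _ (hwmem 1)))
      (Submodule.smul_mem _ _ (hwmem 2))
  have hsple : Submodule.span ℂ (Set.range ![α, w 1, w 2]) ≤ Λ := by
    rw [Submodule.span_le, hrs]
    rintro z hz
    simp only [Set.mem_insert_iff, Set.mem_singleton_iff] at hz
    rcases hz with rfl | rfl | rfl
    exacts [hαmem, hwmem 1, hwmem 2]
  have hαsp : α ∈ Submodule.span ℂ (Set.range ![α, w 1, w 2]) :=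
    Submodule.subset_span (by rw [hrs]; simp)
  have hw1 : w 1 ∈ Submodule.span ℂ (Set.range ![α, w 1, w 2]) :=
    Submodule.subset_span (by rw [hrs]; simp)
  have hw2 : w 2 ∈ Submodule.span ℂ (Set.range ![α, w 1, w 2]) :=
    Submodule.subset_span (by rw [hrs]; simp)
  have hw0 : w 0 ∈ Submodule.span ℂ (Set.range ![α, w 1, w 2]) := by
    have h1 : α - c 1 • w 1 - c 2 • w 2 = c 0 • w 0 := by rw [hα]; abel
    have h2 : w 0 = (c 0)⁻¹ • (α - c 1 • w 1 - c 2 • w 2) := by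
      rw [h1, smul_smul, inv_mul_cancel₀ hc, one_smul]
    rw [h2]
    exact Submodule.smul_mem _ _ (Submodule.sub_mem _ (Submodule.sub_mem _ hαsp
      (Submodule.smul_mem _ _ hw1)) (Submodule.smul_mem _ _ hw2))
  have hspge : Λ ≤ Submodule.span ℂ (Set.range ![α, w 1, w 2]) := by
    rw [← hsp, Submodule.span_le]
    rintro z ⟨j, rfl⟩
    fin_cases j
    exacts [hw0, hw1, hw2]
  have hspeq := le_antisymm hsple hspge
  refine ⟨?_, hspeq⟩
  rw [linearIndependent_iff_card_eq_finrank_span, Fintype.card_fin, Set.finrank, hspeq, hfr]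

lemma exists_basis_with [FiniteDimensional ℂ V] (Λ : Submodule ℂ V)
    (hfr : Module.finrank ℂ Λ = 3) (α : V) (hαΛ : α ∈ Λ) (hα0 : α ≠ 0) :
    ∃ p q : V, LinearIndependent ℂ ![α, p, q] ∧ Submodule.span ℂ (Set.range ![α, p, q]) = Λ := by
  classical
  let t := Module.finBasisOfFinrankEq ℂ Λ hfr
  set v : Fin 3 → V := fun i => ((t i : Λ) : V) with hv
  have hvsp : Submodule.span ℂ (Set.range v) = Λ := by
    calc Submodule.span ℂ (Set.range v)
        = Submodule.map Λ.subtype (Submodule.span ℂ (Set.range t)) := by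
          rw [Submodule.map_span]; exact congrArg _ (Set.range_comp (⇑Λ.subtype) ⇑t)
    _ = Submodule.map Λ.subtype ⊤ := by rw [t.span_eq]
    _ = Λ := by rw [Submodule.map_top, Submodule.range_subtype]
  set c : Fin 3 → ℂ := fun i => t.repr ⟨α, hαΛ⟩ i with hcdef
  have hsum : α = c 0 • v 0 + c 1 • v 1 + c 2 • v 2 := by
    have h1 := t.sum_repr ⟨α, hαΛ⟩
    have h2 := congrArg (Submodule.subtype Λ) h1
    rw [map_sum, Fin.sum_univ_three] at h2
    simp only [map_smul, Submodule.coe_subtype] at h2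
    exact h2.symm
  have hex : ∃ i, c i ≠ 0 := by
    by_contra h
    push_neg at h
    apply hα0
    rw [hsum, h 0, h 1, h 2]
    simp
  obtain ⟨i, hci⟩ := hex
  have hveq : v = ![v 0, v 1, v 2] := by funext j; fin_cases j <;> rfl
  fin_cases i
  · obtain ⟨h1, h2⟩ := repl_lemma Λ v hvsp hfr α c hsum hci
    exact ⟨v 1, v 2, h1, h2⟩
  · have hsp1 : Submodule.span ℂ (Set.range ![v 1, v 0, v 2]) = Λ := by
      rw [← hvsp]
      congr 1
      rw [hveq]
      ext z
      simp [Matrix.range_cons, Matrix.range_empty]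
      tauto
    have hα1 : α = c 1 • v 1 + c 0 • v 0 + c 2 • v 2 := by rw [hsum]; abel
    obtain ⟨h1, h2⟩ := repl_lemma Λ ![v 1, v 0, v 2] hsp1 hfr α ![c 1, c 0, c 2] hα1 hci
    exact ⟨v 0, v 2, h1, h2⟩
  · have hsp1 : Submodule.span ℂ (Set.range ![v 2, v 0, v 1]) = Λ := by
      rw [← hvsp]
      congr 1
      rw [hveq]
      ext z
      simp [Matrix.range_cons, Matrix.range_empty]
      tauto
    have hα1 : α = c 2 • v 2 + c 0 • v 0 + c 1 • v 1 := by rw [hsum]; abel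
    obtain ⟨h1, h2⟩ := repl_lemma Λ ![v 2, v 0, v 1] hsp1 hfr α ![c 2, c 0, c 1] hα1 hci
    exact ⟨v 0, v 1, h1, h2⟩

end Aux

set_option maxHeartbeats 1000000

/-- for `ω ∈ O₅` with kernel line spanned by `α` and associated hyperplane
`A_ω = ker f`, if `Λ ≠ Λ'` are 3-dimensional subspaces with `π_ω(Λ) = π_ω(Λ')`, then
`Λ ∩ Λ' = ℂα` and `Λ + Λ' = A_ω`. -/
theorem stmt7 {V : Type*} [AddCommGroup V] [Module ℂ V] [FiniteDimensional ℂ V]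
    (hV : Module.finrank ℂ V = 6)
    (ω : ExteriorAlgebra ℂ V) (hω : InO5 ω)
    (α : V) (hα : α ≠ 0)
    (hker : ∀ v : V, ι ℂ v * ω = 0 ↔ v ∈ Submodule.span ℂ {α})
    (K : Module.Dual ℂ V →ₗ[ℂ] ExteriorAlgebra ℂ V →ₗ[ℂ] ExteriorAlgebra ℂ V)
    (hK : ∀ (f : Module.Dual ℂ V) (u v w : V),
      K f (ι ℂ u * ι ℂ v * ι ℂ w) =
        f u • (ι ℂ v * ι ℂ w) - f v • (ι ℂ u * ι ℂ w) + f w • (ι ℂ u * ι ℂ v))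
    (f : Module.Dual ℂ V) (hf : f ≠ 0) (hfω : K f ω = 0)
    (Λ Λ' : Submodule ℂ V)
    (hΛ : Module.finrank ℂ Λ = 3) (hΛ' : Module.finrank ℂ Λ' = 3) (hne : Λ ≠ Λ')
    (u u' : ExteriorAlgebra ℂ V)
    (hu : IsPluckerVector 3 Λ u) (hu' : IsPluckerVector 3 Λ' u')
    (heq : ProjEq (Submodule.span ℂ {ω}) u u') :
    Λ ⊓ Λ' = Submodule.span ℂ {α} ∧ Λ ⊔ Λ' = LinearMap.ker f := by
  classical
  obtain ⟨hω3, hωnd, -⟩ := hω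
  obtain ⟨v, hvs, huv⟩ := hu
  obtain ⟨v', hvs', huv'⟩ := hu'
  have hli3 : ∀ (N : Submodule ℂ V), Module.finrank ℂ N = 3 → ∀ w : Fin 3 → V,
      Submodule.span ℂ (Set.range w) = N → LinearIndependent ℂ w := by
    intro N hN w hw
    rw [linearIndependent_iff_card_eq_finrank_span, Set.finrank, hw, hN, Fintype.card_fin]
  have hvi := hli3 Λ hΛ v hvs
  have hvi' := hli3 Λ' hΛ' v' hvs'
  have hu0 : u ≠ 0 := by rw [huv]; exact ιMulti_ne_zero v hvi
  have hu0' : u' ≠ 0 := by rw [huv']; exact ιMulti_ne_zero v' hvi'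
  have hmemΛ : ∀ x : V, ι ℂ x * u = 0 ↔ x ∈ Λ := by
    intro x
    rw [huv, ← hvs]
    exact ⟨fun h => mem_span_of_mul_eq_zero x v hvi h, fun h => mul_ιMulti_eq_zero x v h⟩
  have hmemΛ' : ∀ x : V, ι ℂ x * u' = 0 ↔ x ∈ Λ' := by
    intro x
    rw [huv', ← hvs']
    exact ⟨fun h => mem_span_of_mul_eq_zero x v' hvi' h, fun h => mul_ιMulti_eq_zero x v' h⟩
  set Z := Submodule.span ℂ {ω} with hZ
  have hmk : ∀ x : ExteriorAlgebra ℂ V, Z.mkQ x = 0 ↔ x ∈ Z := by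
    intro x
    rw [Submodule.mkQ_apply, Submodule.Quotient.mk_eq_zero]
  have hqgen : ∀ (y : ExteriorAlgebra ℂ V) (w : Fin 3 → V), y = ιMulti ℂ 3 w → y ≠ 0 →
      Z.mkQ y ≠ 0 := by
    intro y w hyw hy0 h
    rw [hmk, hZ, Submodule.mem_span_singleton] at h
    obtain ⟨c, hc⟩ := h
    rcases eq_or_ne c 0 with h0 | h0
    · rw [h0, zero_smul] at hc
      exact hy0 hc.symm
    · apply hωnd
      refine ⟨c⁻¹ • w 0, w 1, w 2, ?_⟩
      have hωy : ω = c⁻¹ • y := by rw [← hc, smul_smul, inv_mul_cancel₀ h0, one_smul]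
      rw [hωy, hyw, ιMulti_eq3, map_smul, smul_mul_assoc, smul_mul_assoc]
  have hqu : Z.mkQ u ≠ 0 := hqgen u v huv hu0
  have hqu' : Z.mkQ u' ≠ 0 := hqgen u' v' huv' hu0'
  have h1 : Z.mkQ u' ∈ Submodule.span ℂ {Z.mkQ u} := by
    rw [heq]
    exact Submodule.mem_span_singleton_self _
  obtain ⟨c, hc⟩ := Submodule.mem_span_singleton.mp h1
  have hc0 : c ≠ 0 := by
    rintro rfl
    rw [zero_smul] at hc
    exact hqu' hc.symm
  have h2 : u' - c • u ∈ Z := by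
    rw [← hmk, map_sub, map_smul, ← hc, sub_self]
  obtain ⟨d, hd⟩ := Submodule.mem_span_singleton.mp h2
  have hd0 : d ≠ 0 := by
    rintro rfl
    rw [zero_smul] at hd
    have hu'c : u' = c • u := by
      have := hd.symm
      rwa [sub_eq_zero] at this
    apply hne
    ext x
    rw [← hmemΛ x, ← hmemΛ' x, hu'c, mul_smul_comm]
    constructor
    · intro h; rw [h, smul_zero]
    · intro h; exact (smul_eq_zero.mp h).resolve_left hc0
  have habex : ∃ a b : ℂ, a ≠ 0 ∧ b ≠ 0 ∧ ω = a • u + b • u' := by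
    refine ⟨-(c * d⁻¹), d⁻¹, by simp [hc0, hd0], inv_ne_zero hd0, ?_⟩
    have h3 : d⁻¹ • (d • ω) = d⁻¹ • (u' - c • u) := congrArg _ hd
    rw [inv_smul_smul₀ hd0] at h3
    rw [h3]
    module
  obtain ⟨a, b, ha0, hb0, hωab⟩ := habex
  have hαω : ι ℂ α * ω = 0 := (hker α).mpr (Submodule.mem_span_singleton_self α)
  -- dimension of the intersection
  have hinf3 : Module.finrank ℂ ↥(Λ ⊓ Λ') < 3 := by
    by_contra h
    push_neg at h
    have e1 : Λ ⊓ Λ' = Λ := Submodule.eq_of_le_of_finrank_le inf_le_left (le_trans (le_of_eq hΛ) h)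
    have e2 : Λ ⊓ Λ' = Λ' :=
      Submodule.eq_of_le_of_finrank_le inf_le_right (le_trans (le_of_eq hΛ') h)
    exact hne (e1.symm.trans e2)
  have hinf2 : Module.finrank ℂ ↥(Λ ⊓ Λ') ≠ 2 := by
    intro h2
    set L := Λ ⊓ Λ' with hL
    let t : Module.Basis (Fin 2) ℂ L := Module.finBasisOfFinrankEq ℂ L h2
    set x : Fin 2 → V := fun i => ((t i : L) : V) with hx
    have hxli : LinearIndependent ℂ x := t.linearIndependent.map' L.subtype L.ker_subtype
    have hxsp : Submodule.span ℂ (Set.range x) = L := by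
      calc Submodule.span ℂ (Set.range x)
          = Submodule.map L.subtype (Submodule.span ℂ (Set.range t)) := by
            rw [Submodule.map_span]; exact congrArg _ (Set.range_comp (⇑L.subtype) ⇑t)
      _ = Submodule.map L.subtype ⊤ := by rw [t.span_eq]
      _ = L := by rw [Submodule.map_top, Submodule.range_subtype]
    have hLΛ : L < Λ := lt_of_le_of_ne inf_le_left (by
      intro h
      rw [h, hΛ] at h2
      norm_num at h2)
    have hLΛ' : L < Λ' := lt_of_le_of_ne inf_le_right (by
      intro h
      rw [h, hΛ'] at h2
      norm_num at h2)
    obtain ⟨y, hyΛ, hyL⟩ := SetLike.exists_of_lt hLΛ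
    obtain ⟨y', hyΛ', hyL'⟩ := SetLike.exists_of_lt hLΛ'
    have hwli : LinearIndependent ℂ (Fin.cons y x : Fin 3 → V) :=
      linearIndependent_fin_cons.mpr ⟨hxli, by rwa [hxsp]⟩
    have hwli' : LinearIndependent ℂ (Fin.cons y' x : Fin 3 → V) :=
      linearIndependent_fin_cons.mpr ⟨hxli, by rwa [hxsp]⟩
    have hwsp : Submodule.span ℂ (Set.range (Fin.cons y x : Fin 3 → V)) = Λ := by
      apply Submodule.eq_of_le_of_finrank_le
      · rw [Fin.range_cons, Submodule.span_le]
        rintro z hz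
        rcases hz with rfl | hz
        · exact hyΛ
        · obtain ⟨j, rfl⟩ := hz
          exact hLΛ.le (hxsp ▸ Submodule.subset_span (Set.mem_range_self j))
      · have h5 := linearIndependent_iff_card_eq_finrank_span.mp hwli
        rw [Fintype.card_fin, Set.finrank] at h5
        rw [hΛ, ← h5]
    have hwsp' : Submodule.span ℂ (Set.range (Fin.cons y' x : Fin 3 → V)) = Λ' := by
      apply Submodule.eq_of_le_of_finrank_le
      · rw [Fin.range_cons, Submodule.span_le]
        rintro z hz
        rcases hz with rfl | hz
        · exact hyΛ'
        · obtain ⟨j, rfl⟩ := hz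
          exact hLΛ'.le (hxsp ▸ Submodule.subset_span (Set.mem_range_self j))
      · have h5 := linearIndependent_iff_card_eq_finrank_span.mp hwli'
        rw [Fintype.card_fin, Set.finrank] at h5
        rw [hΛ', ← h5]
    obtain ⟨k, hk⟩ := exists_smul_eq_ιMulti (Fin.cons y x) v hwli
      (fun j => by rw [hwsp, ← hvs]; exact Submodule.subset_span (Set.mem_range_self j))
    obtain ⟨k', hk'⟩ := exists_smul_eq_ιMulti (Fin.cons y' x) v' hwli'
      (fun j => by rw [hwsp', ← hvs']; exact Submodule.subset_span (Set.mem_range_self j))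
    apply hωnd
    refine ⟨(a * k) • y + (b * k') • y', x 0, x 1, ?_⟩
    have e1 : ιMulti ℂ 3 (Fin.cons y x : Fin 3 → V) = ι ℂ y * ι ℂ (x 0) * ι ℂ (x 1) := by
      rw [ιMulti_eq3]; rfl
    have e2 : ιMulti ℂ 3 (Fin.cons y' x : Fin 3 → V) = ι ℂ y' * ι ℂ (x 0) * ι ℂ (x 1) := by
      rw [ιMulti_eq3]; rfl
    rw [hωab, huv, huv', hk, hk', e1, e2]
    simp only [map_add, map_smul, add_mul, smul_mul_assoc, smul_smul]
  -- α belongs to both subspaces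
  have himp : ι ℂ α * u = 0 → ι ℂ α * u' = 0 := by
    intro h
    have h3 := hαω
    rw [hωab, mul_add, mul_smul_comm, mul_smul_comm, h, smul_zero, zero_add] at h3
    exact (smul_eq_zero.mp h3).resolve_left hb0
  have himp' : ι ℂ α * u' = 0 → ι ℂ α * u = 0 := by
    intro h
    have h3 := hαω
    rw [hωab, mul_add, mul_smul_comm, mul_smul_comm, h, smul_zero, add_zero] at h3
    exact (smul_eq_zero.mp h3).resolve_left ha0
  have hαΛ : α ∈ Λ := by
    by_contra hA
    have hA' : α ∉ Λ' := fun h => hA ((hmemΛ α).mp (himp' ((hmemΛ' α).mpr h)))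
    have hcli : LinearIndependent ℂ (Fin.cons α v : Fin 4 → V) :=
      linearIndependent_fin_cons.mpr ⟨hvi, by rwa [hvs]⟩
    have hcli' : LinearIndependent ℂ (Fin.cons α v' : Fin 4 → V) :=
      linearIndependent_fin_cons.mpr ⟨hvi', by rwa [hvs']⟩
    have h0 : a • ιMulti ℂ 4 (Fin.cons α v) + b • ιMulti ℂ 4 (Fin.cons α v') = 0 := by
      have h3 := hαω
      rw [hωab, mul_add, mul_smul_comm, mul_smul_comm, huv, huv', iota_cons, iota_cons] at h3
      exact h3
    have hX : ιMulti ℂ 4 (Fin.cons α v') = (-(a * b⁻¹)) • ιMulti ℂ 4 (Fin.cons α v) := by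
      have h4 : b • ιMulti ℂ 4 (Fin.cons α v') = -(a • ιMulti ℂ 4 (Fin.cons α v)) := by
        exact eq_neg_of_add_eq_zero_right h0
      have h5 := congrArg (fun z => b⁻¹ • z) h4
      simp only [smul_smul, inv_mul_cancel₀ hb0, one_smul, smul_neg] at h5
      rw [h5]
      module
    have hab0 : -(a * b⁻¹) ≠ 0 := by simp [ha0, hb0]
    have hsub : ∀ j, v' j ∈ Submodule.span ℂ (Set.range (Fin.cons α v : Fin 4 → V)) := by
      intro j
      apply mem_span_of_mul_eq_zero _ _ hcli
      have hz : ι ℂ (v' j) * ιMulti ℂ 4 (Fin.cons α v') = 0 := by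
        apply mul_ιMulti_eq_zero
        apply Submodule.subset_span
        rw [Fin.range_cons]
        exact Set.mem_insert_of_mem _ (Set.mem_range_self j)
      rw [hX, mul_smul_comm] at hz
      exact (smul_eq_zero.mp hz).resolve_left hab0
    have hWle : Λ ⊔ Λ' ≤ Submodule.span ℂ (Set.range (Fin.cons α v : Fin 4 → V)) := by
      apply sup_le
      · rw [← hvs, Submodule.span_le]
        rintro z ⟨j, rfl⟩
        apply Submodule.subset_span
        rw [Fin.range_cons]
        exact Set.mem_insert_of_mem _ (Set.mem_range_self j)
      · rw [← hvs', Submodule.span_le]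
        rintro z ⟨j, rfl⟩
        exact hsub j
    have hW4 : Module.finrank ℂ ↥(Submodule.span ℂ (Set.range (Fin.cons α v : Fin 4 → V))) = 4 := by
      have h5 := linearIndependent_iff_card_eq_finrank_span.mp hcli
      rw [Fintype.card_fin, Set.finrank] at h5
      exact h5.symm
    have hsup4 : Module.finrank ℂ ↥(Λ ⊔ Λ') ≤ 4 := hW4 ▸ Submodule.finrank_mono hWle
    have hcount := Submodule.finrank_sup_add_finrank_inf_eq Λ Λ'
    rw [hΛ, hΛ'] at hcount
    omega
  have hαΛ' : α ∈ Λ' := (hmemΛ' α).mp (himp ((hmemΛ α).mpr hαΛ))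
  have hspanle : Submodule.span ℂ {α} ≤ Λ ⊓ Λ' :=
    (Submodule.span_singleton_le_iff_mem α _).mpr (Submodule.mem_inf.mpr ⟨hαΛ, hαΛ'⟩)
  have hsing1 : Module.finrank ℂ ↥(Submodule.span ℂ {α}) = 1 := finrank_span_singleton hα
  have hinf_eq : Λ ⊓ Λ' = Submodule.span ℂ {α} := by
    symm
    apply Submodule.eq_of_le_of_finrank_le hspanle
    rw [hsing1]
    omega
  have hinf1 : Module.finrank ℂ ↥(Λ ⊓ Λ') = 1 := by rw [hinf_eq, hsing1]
  have hcount := Submodule.finrank_sup_add_finrank_inf_eq Λ Λ'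
  rw [hΛ, hΛ', hinf1] at hcount
  have hsup5 : Module.finrank ℂ ↥(Λ ⊔ Λ') = 5 := by omega
  refine ⟨hinf_eq, ?_⟩
  -- second part
  obtain ⟨p, q, hxli, hxsp⟩ := exists_basis_with Λ hΛ α hαΛ hα
  obtain ⟨p', q', hxli', hxsp'⟩ := exists_basis_with Λ' hΛ' α hαΛ' hα
  have hpΛ : p ∈ Λ := hxsp ▸ Submodule.subset_span (by simp [Matrix.range_cons])
  have hqΛ : q ∈ Λ := hxsp ▸ Submodule.subset_span (by simp [Matrix.range_cons])
  have hpΛ' : p' ∈ Λ' := hxsp' ▸ Submodule.subset_span (by simp [Matrix.range_cons])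
  have hqΛ' : q' ∈ Λ' := hxsp' ▸ Submodule.subset_span (by simp [Matrix.range_cons])
  set e : Fin 5 → V := ![α, p, q, p', q'] with he
  have hesp : Submodule.span ℂ (Set.range e) = Λ ⊔ Λ' := by
    apply le_antisymm
    · rw [Submodule.span_le]
      rintro z ⟨j, rfl⟩
      fin_cases j
      · exact le_sup_left (α := Submodule ℂ V) hαΛ
      · exact le_sup_left (α := Submodule ℂ V) hpΛ
      · exact le_sup_left (α := Submodule ℂ V) hqΛ
      · exact le_sup_right (α := Submodule ℂ V) hpΛ'
      · exact le_sup_right (α := Submodule ℂ V) hqΛ'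
    · apply sup_le
      · rw [← hxsp, Submodule.span_le]
        rintro z ⟨j, rfl⟩
        apply Submodule.subset_span
        fin_cases j
        · exact ⟨0, rfl⟩
        · exact ⟨1, rfl⟩
        · exact ⟨2, rfl⟩
      · rw [← hxsp', Submodule.span_le]
        rintro z ⟨j, rfl⟩
        apply Submodule.subset_span
        fin_cases j
        · exact ⟨0, rfl⟩
        · exact ⟨3, rfl⟩
        · exact ⟨4, rfl⟩
  have heli : LinearIndependent ℂ e := by
    rw [linearIndependent_iff_card_eq_finrank_span, Fintype.card_fin, Set.finrank, hesp, hsup5]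
  obtain ⟨g, hg⟩ := exists_dual_family e heli
  have gval : ∀ i j, g i (![α, p, q, p', q'] j) = if i = j then 1 else 0 := by
    intro i j
    have := hg i j
    rwa [he] at this
  have g00 : g 0 α = 1 := by simpa using gval 0 0
  have g01 : g 0 p = 0 := by simpa using gval 0 1
  have g02 : g 0 q = 0 := by simpa using gval 0 2
  have g03 : g 0 p' = 0 := by simpa using gval 0 3
  have g04 : g 0 q' = 0 := by simpa using gval 0 4
  have g10 : g 1 α = 0 := by simpa using gval 1 0
  have g11 : g 1 p = 1 := by simpa using gval 1 1
  have g12 : g 1 q = 0 := by simpa using gval 1 2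
  have g13 : g 1 p' = 0 := by simpa using gval 1 3
  have g14 : g 1 q' = 0 := by simpa using gval 1 4
  have g20 : g 2 α = 0 := by simpa using gval 2 0
  have g21 : g 2 p = 0 := by simpa using gval 2 1
  have g22 : g 2 q = 1 := by simpa using gval 2 2
  have g23 : g 2 p' = 0 := by simpa using gval 2 3
  have g24 : g 2 q' = 0 := by simpa using gval 2 4
  have g30 : g 3 α = 0 := by simpa using gval 3 0
  have g31 : g 3 p = 0 := by simpa using gval 3 1
  have g32 : g 3 q = 0 := by simpa using gval 3 2
  have g33 : g 3 p' = 1 := by simpa using gval 3 3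
  have g34 : g 3 q' = 0 := by simpa using gval 3 4
  have g40 : g 4 α = 0 := by simpa using gval 4 0
  have g41 : g 4 p = 0 := by simpa using gval 4 1
  have g42 : g 4 q = 0 := by simpa using gval 4 2
  have g43 : g 4 p' = 0 := by simpa using gval 4 3
  have g44 : g 4 q' = 1 := by simpa using gval 4 4
  obtain ⟨k, hk⟩ := exists_smul_eq_ιMulti ![α, p, q] v hxli
    (fun j => by rw [hxsp, ← hvs]; exact Submodule.subset_span (Set.mem_range_self j))
  obtain ⟨k', hk'⟩ := exists_smul_eq_ιMulti ![α, p', q'] v' hxli'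
    (fun j => by rw [hxsp', ← hvs']; exact Submodule.subset_span (Set.mem_range_self j))
  have hk0 : k ≠ 0 := by
    rintro rfl
    rw [zero_smul] at hk
    exact hu0 (huv ▸ hk)
  have hk0' : k' ≠ 0 := by
    rintro rfl
    rw [zero_smul] at hk'
    exact hu0' (huv' ▸ hk')
  have hKu : K f u = k • (f α • (ι ℂ p * ι ℂ q) - f p • (ι ℂ α * ι ℂ q)
      + f q • (ι ℂ α * ι ℂ p)) := by
    rw [huv, hk, map_smul, ιMulti_mk3, hK]
  have hKu' : K f u' = k' • (f α • (ι ℂ p' * ι ℂ q') - f p' • (ι ℂ α * ι ℂ q')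
      + f q' • (ι ℂ α * ι ℂ p')) := by
    rw [huv', hk', map_smul, ιMulti_mk3, hK]
  have hEq : (a * k) • (f α • (ι ℂ p * ι ℂ q) - f p • (ι ℂ α * ι ℂ q) + f q • (ι ℂ α * ι ℂ p))
      + (b * k') • (f α • (ι ℂ p' * ι ℂ q') - f p' • (ι ℂ α * ι ℂ q')
      + f q' • (ι ℂ α * ι ℂ p')) = 0 := by
    have h3 := hfω
    rw [hωab, map_add, map_smul, map_smul, hKu, hKu', smul_smul, smul_smul] at h3
    exact h3
  have hfα : f α = 0 := by
    have h3 := congrArg (phiF 2 ![g 1, g 2]) hEq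
    simp only [map_add, map_smul, map_sub, map_zero, phiF2_mul, smul_eq_mul,
      g10, g11, g12, g13, g14, g20, g21, g22, g23, g24] at h3
    norm_num at h3
    simp only [ha0, hk0, or_self, false_or] at h3
    exact h3
  have hfp : f p = 0 := by
    have h3 := congrArg (phiF 2 ![g 0, g 2]) hEq
    simp only [map_add, map_smul, map_sub, map_zero, phiF2_mul, smul_eq_mul,
      g00, g01, g02, g03, g04, g20, g21, g22, g23, g24] at h3
    norm_num at h3
    simp only [ha0, hk0, or_self, false_or] at h3
    exact h3
  have hfq : f q = 0 := by
    have h3 := congrArg (phiF 2 ![g 0, g 1]) hEq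
    simp only [map_add, map_smul, map_sub, map_zero, phiF2_mul, smul_eq_mul,
      g00, g01, g02, g03, g04, g10, g11, g12, g13, g14] at h3
    norm_num at h3
    simp only [ha0, hk0, or_self, false_or] at h3
    exact h3
  have hfp' : f p' = 0 := by
    have h3 := congrArg (phiF 2 ![g 0, g 4]) hEq
    simp only [map_add, map_smul, map_sub, map_zero, phiF2_mul, smul_eq_mul,
      g00, g01, g02, g03, g04, g40, g41, g42, g43, g44] at h3
    norm_num at h3
    simp only [hb0, hk0', or_self, false_or] at h3
    exact h3
  have hfq' : f q' = 0 := by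
    have h3 := congrArg (phiF 2 ![g 0, g 3]) hEq
    simp only [map_add, map_smul, map_sub, map_zero, phiF2_mul, smul_eq_mul,
      g00, g01, g02, g03, g04, g30, g31, g32, g33, g34] at h3
    norm_num at h3
    simp only [hb0, hk0', or_self, false_or] at h3
    exact h3
  have hker5 : Module.finrank ℂ ↥(LinearMap.ker f) = 5 := by
    have hr := LinearMap.finrank_range_add_finrank_ker f
    rw [hV] at hr
    have hrange1 : Module.finrank ℂ ↥(LinearMap.range f) = 1 := by
      have hne0 : LinearMap.range f ≠ ⊥ := fun h => hf (LinearMap.range_eq_bot.mp h)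
      have hle : Module.finrank ℂ ↥(LinearMap.range f) ≤ 1 := by
        have := Submodule.finrank_le (LinearMap.range f)
        simpa using this
      have hge : Module.finrank ℂ ↥(LinearMap.range f) ≠ 0 := by
        intro h
        exact hne0 (Submodule.finrank_eq_zero.mp h)
      omega
    rw [hrange1] at hr
    omega
  have hsuple : Λ ⊔ Λ' ≤ LinearMap.ker f := by
    apply sup_le
    · rw [← hxsp, Submodule.span_le]
      rintro z ⟨j, rfl⟩
      fin_cases j
      · exact LinearMap.mem_ker.mpr hfα
      · exact LinearMap.mem_ker.mpr hfp
      · exact LinearMap.mem_ker.mpr hfq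
    · rw [← hxsp', Submodule.span_le]
      rintro z ⟨j, rfl⟩
      fin_cases j
      · exact LinearMap.mem_ker.mpr hfα
      · exact LinearMap.mem_ker.mpr hfp'
      · exact LinearMap.mem_ker.mpr hfq'
  exact Submodule.eq_of_le_of_finrank_le hsuple (by rw [hker5, hsup5])
end
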